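/- Let μ > 0 and let f₁, f₂ : [0,1] → (0,∞) be C² functions satisfying f₂''/f₂ - (f₁'f₂')/(f₁f₂) = 0 and f₁''/f₁ - (f₂')²/f₂² + μ/f₂² = 0 on [0,1]. If f₂(0) = f₂(1), then f₂ is constant on [0,1], and f₁ satisfies f₁'' + (μ/f₂(0)²)f₁ = 0. -/

import Mathlib

open Real Set

theorem stmt_17 (μ : ℝ) (hμ : 0 < μ) (f₁ f₂ : ℝ → ℝ)
    (hf₁ : ContDiffOn ℝ 2 f₁ (Set.Icc 0 1)) (hf₂ : ContDiffOn ℝ 2 f₂ (Set.Icc 0 1))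
    (hpos₁ : ∀ r ∈ Set.Icc (0:ℝ) 1, 0 < f₁ r)
    (hpos₂ : ∀ r ∈ Set.Icc (0:ℝ) 1, 0 < f₂ r)
    (heq1 : ∀ r ∈ Set.Icc (0:ℝ) 1,
      derivWithin (derivWithin f₂ (Set.Icc 0 1)) (Set.Icc 0 1) r / f₂ r -
        (derivWithin f₁ (Set.Icc 0 1) r * derivWithin f₂ (Set.Icc 0 1) r) /
          (f₁ r * f₂ r) = 0)
    (heq2 : ∀ r ∈ Set.Icc (0:ℝ) 1,
      derivWithin (derivWithin f₁ (Set.Icc 0 1)) (Set.Icc 0 1) r / f₁ r -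
        (derivWithin f₂ (Set.Icc 0 1) r) ^ 2 / (f₂ r) ^ 2 + μ / (f₂ r) ^ 2 = 0)
    (hbd : f₂ 0 = f₂ 1) :
    (∀ r ∈ Set.Icc (0:ℝ) 1, f₂ r = f₂ 0) ∧
    (∀ r ∈ Set.Icc (0:ℝ) 1,
      derivWithin (derivWithin f₁ (Set.Icc 0 1)) (Set.Icc 0 1) r +
        (μ / (f₂ 0) ^ 2) * f₁ r = 0) := by
  have hU : UniqueDiffOn ℝ (Set.Icc (0:ℝ) 1) := uniqueDiffOn_Icc zero_lt_one
  have hd₁ : DifferentiableOn ℝ f₁ (Set.Icc (0:ℝ) 1) := hf₁.differentiableOn two_ne_zero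
  have hd₂ : DifferentiableOn ℝ f₂ (Set.Icc (0:ℝ) 1) := hf₂.differentiableOn two_ne_zero
  set g : ℝ → ℝ := derivWithin f₂ (Set.Icc 0 1) with hg_def
  have hgC : ContDiffOn ℝ 1 g (Set.Icc (0:ℝ) 1) := hf₂.derivWithin hU (by norm_num)
  have hgd : DifferentiableOn ℝ g (Set.Icc (0:ℝ) 1) := hgC.differentiableOn one_ne_zero
  -- h = g / f₁ is constant
  have hh_diff : DifferentiableOn ℝ (fun r => g r / f₁ r) (Set.Icc (0:ℝ) 1) :=
    hgd.div hd₁ (fun x hx => (hpos₁ x hx).ne')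
  have hh_deriv : ∀ x ∈ Set.Icc (0:ℝ) 1,
      derivWithin (fun r => g r / f₁ r) (Set.Icc 0 1) x = 0 := by
    intro x hx
    have h1 := hpos₁ x hx
    have h2 := hpos₂ x hx
    rw [derivWithin_fun_div (hgd x hx) (hd₁ x hx) h1.ne']
    have e1 := heq1 x hx
    have hnum : derivWithin g (Set.Icc 0 1) x * f₁ x - g x * derivWithin f₁ (Set.Icc 0 1) x = 0 := by
      have h1' := h1.ne'
      have h2' := h2.ne'
      field_simp at e1
      nlinarith [e1]
    rw [hnum, zero_div]
  have hconst : ∀ x ∈ Set.Icc (0:ℝ) 1, g x / f₁ x = g 0 / f₁ 0 :=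
    constant_of_derivWithin_zero hh_diff (fun x hx => hh_deriv x (Ico_subset_Icc_self hx))
  -- Rolle gives a zero of g
  obtain ⟨c, hc, hderiv⟩ := exists_deriv_eq_zero zero_lt_one hd₂.continuousOn hbd
  have hcI : c ∈ Set.Icc (0:ℝ) 1 := Ioo_subset_Icc_self hc
  have hgc : g c = 0 := by
    rw [hg_def, derivWithin_of_mem_nhds (Icc_mem_nhds hc.1 hc.2), hderiv]
  have hzero : ∀ x ∈ Set.Icc (0:ℝ) 1, g x = 0 := by
    intro x hx
    have h0 : g 0 / f₁ 0 = 0 := by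
      rw [← hconst c hcI, hgc, zero_div]
    have := (hconst x hx).trans h0
    rcases div_eq_zero_iff.mp this with h | h
    · exact h
    · exact absurd h (hpos₁ x hx).ne'
  have hf₂const : ∀ r ∈ Set.Icc (0:ℝ) 1, f₂ r = f₂ 0 :=
    constant_of_derivWithin_zero hd₂ (fun x hx => hzero x (Ico_subset_Icc_self hx))
  refine ⟨hf₂const, fun r hr => ?_⟩
  have e2 := heq2 r hr
  rw [hzero r hr, hf₂const r hr] at e2
  have h1 := hpos₁ r hr
  have h2 := hpos₂ 0 (by norm_num : (0:ℝ) ∈ Set.Icc (0:ℝ) 1)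
  have h1' := h1.ne'
  have h2' := h2.ne'
  field_simp at e2 ⊢
  nlinarith [e2]
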